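/- arXiv:0807.0262 — 5 statements merged into one kernel-verified Lean document; each statement's English description precedes it below -/
import Mathlib

section
/- For k ≥ 2, the function a ↦ E[(ξ_2²+…+ξ_k²)/((ξ_1+a)²+ξ_2²+…+ξ_k²)^{3/2}] attains its maximum over ℝ at a = 0, where ξ_1,…,ξ_k are i.i.d. standard normal. -/
open MeasureTheory ProbabilityTheory Real Set
open scoped ENNReal NNReal

lemma gpdf_even (x : ℝ) : gaussianPDFReal 0 1 (-x) = gaussianPDFReal 0 1 x := by
  simp [gaussianPDFReal]

lemma gpdf_anti {x y : ℝ} (h : y ^ 2 ≤ x ^ 2) :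
    gaussianPDFReal 0 1 x ≤ gaussianPDFReal 0 1 y := by
  simp only [gaussianPDFReal, sub_zero, NNReal.coe_one, mul_one]
  apply mul_le_mul_of_nonneg_left (exp_le_exp.2 (by linarith)) (by positivity)

lemma interval_ineq {r b : ℝ} (hr : 0 ≤ r) (hb : 0 ≤ b) :
    ∫ x in (-r-b)..(r-b), gaussianPDFReal 0 1 x ≤ ∫ x in (-r)..r, gaussianPDFReal 0 1 x := by
  set φ := gaussianPDFReal 0 1 with hφ
  have hint : Integrable φ := integrable_gaussianPDFReal 0 1
  have hii : ∀ p q : ℝ, IntervalIntegrable φ volume p q := fun p q => hint.intervalIntegrable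
  have key : ∫ x in (-r-b)..(-r), φ x ≤ ∫ x in (r-b)..r, φ x := by
    have h1 : ∫ x in (-r-b)..(-r), φ x = ∫ x in r..(r+b), φ x := by
      rw [show (∫ x in r..(r+b), φ x) = ∫ x in r..(r+b), φ (-x) from
        intervalIntegral.integral_congr fun x _ => (gpdf_even x).symm]
      rw [intervalIntegral.integral_comp_neg (fun x => φ x)]
      rw [show -(r+b) = -r-b by ring]
    have h2 : ∫ x in (r-b)..r, φ x = ∫ x in r..(r+b), φ (2*r - x) := by
      rw [intervalIntegral.integral_comp_sub_left φ (2*r)]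
      rw [show 2*r - (r+b) = r - b by ring, show 2*r - r = r by ring]
    have h3 : IntervalIntegrable (fun x => φ (2*r - x)) volume r (r+b) := by
      have h := (hii r (r-b)).comp_sub_left (2*r)
      rw [show 2*r - r = r by ring, show 2*r - (r-b) = r+b by ring] at h
      exact h
    rw [h1, h2]
    apply intervalIntegral.integral_mono_on (by linarith) (hii _ _) h3
    intro x hx
    apply gpdf_anti
    have h4 : r ≤ x := hx.1
    have : -x ≤ 2*r - x := by linarith
    nlinarith
  have e1 := intervalIntegral.integral_add_adjacent_intervals (hii (-r-b) (-r)) (hii (-r) (r-b))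
  have e2 := intervalIntegral.integral_add_adjacent_intervals (hii (-r) (r-b)) (hii (r-b) r)
  linarith

lemma gauss_Ioo_le {r : ℝ} (hr : 0 ≤ r) (b : ℝ) :
    gaussianReal 0 1 (Ioo (-r-b) (r-b)) ≤ gaussianReal 0 1 (Ioo (-r) r) := by
  have main : ∀ b : ℝ, 0 ≤ b →
      gaussianReal 0 1 (Ioo (-r-b) (r-b)) ≤ gaussianReal 0 1 (Ioo (-r) r) := by
    intro b hb
    rw [gaussianReal_apply_eq_integral 0 one_ne_zero, gaussianReal_apply_eq_integral 0 one_ne_zero]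
    apply ENNReal.ofReal_le_ofReal
    have h1 : (-r-b) ≤ (r-b) := by linarith
    have h2 : (-r) ≤ r := by linarith
    rw [← integral_Ioc_eq_integral_Ioo, ← integral_Ioc_eq_integral_Ioo,
      ← intervalIntegral.integral_of_le h1, ← intervalIntegral.integral_of_le h2]
    exact interval_ineq hr hb
  rcases le_or_gt 0 b with hb | hb
  · exact main b hb
  · -- reflect
    have hrefl : ∀ p q : ℝ, gaussianReal 0 1 (Ioo p q) = gaussianReal 0 1 (Ioo (-q) (-p)) := by
      intro p q
      have hmap : (gaussianReal 0 1).map (fun x => (-1 : ℝ) * x) = gaussianReal 0 1 := by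
        rw [gaussianReal_map_const_mul (-1 : ℝ)]
        norm_num
      conv_lhs => rw [← hmap]
      rw [Measure.map_apply (measurable_const_mul _) measurableSet_Ioo]
      congr 1
      ext x
      simp only [mem_preimage, mem_Ioo]
      constructor <;> intro h <;> constructor <;> linarith [h.1, h.2]
    rw [hrefl]
    have : -(r - b) = -r - (-b) := by ring
    rw [this, show -(-r - b) = r - (-b) by ring]
    exact main (-b) (by linarith)

lemma gauss_set_le (c b : ℝ) :
    gaussianReal 0 1 {x | (x+b)^2 < c} ≤ gaussianReal 0 1 {x | x^2 < c} := by
  rcases le_or_gt c 0 with hc | hc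
  · have : {x : ℝ | (x+b)^2 < c} = ∅ := by
      ext x; simp only [mem_setOf_eq, mem_empty_iff_false, iff_false, not_lt]
      nlinarith [sq_nonneg (x+b)]
    simp [this]
  · set r := Real.sqrt c with hrdef
    have hr : 0 < r := Real.sqrt_pos.2 hc
    have hr2 : r^2 = c := Real.sq_sqrt hc.le
    have hs1 : {x : ℝ | (x+b)^2 < c} = Ioo (-r-b) (r-b) := by
      ext x
      simp only [mem_setOf_eq, mem_Ioo, ← hr2]
      constructor
      · intro h
        have := abs_lt_of_sq_lt_sq' h hr.le
        exact ⟨by linarith [this.1], by linarith [this.2]⟩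
      · intro ⟨h1, h2⟩
        exact sq_lt_sq' (by linarith) (by linarith)
    have hs2 : {x : ℝ | x^2 < c} = Ioo (-r) r := by
      ext x
      simp only [mem_setOf_eq, mem_Ioo, ← hr2]
      constructor
      · intro h
        exact abs_lt_of_sq_lt_sq' h hr.le
      · intro ⟨h1, h2⟩
        exact sq_lt_sq' h1 h2
    rw [hs1, hs2]
    exact gauss_Ioo_le hr.le b

lemma meas_g {s b : ℝ} : Measurable (fun x : ℝ => s / ((x+b)^2 + s) ^ ((3:ℝ)/2)) := by
  apply Measurable.div measurable_const
  exact (((measurable_id.add_const b).pow_const 2).add_const s).pow measurable_const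

lemma g_nonneg {s : ℝ} (hs : 0 ≤ s) (b x : ℝ) : 0 ≤ s / ((x+b)^2 + s) ^ ((3:ℝ)/2) :=
  div_nonneg hs (Real.rpow_nonneg (by positivity) _)

lemma oneD_le {s : ℝ} (hs : 0 ≤ s) (b : ℝ) :
    ∫⁻ x, ENNReal.ofReal (s / ((x+b)^2 + s) ^ ((3:ℝ)/2)) ∂(gaussianReal 0 1)
      ≤ ∫⁻ x, ENNReal.ofReal (s / (x^2 + s) ^ ((3:ℝ)/2)) ∂(gaussianReal 0 1) := by
  rcases eq_or_lt_of_le hs with rfl | hs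
  · simp
  have hset : ∀ (b : ℝ) (t : ℝ), 0 < t →
      {x : ℝ | t < s / ((x+b)^2 + s) ^ ((3:ℝ)/2)}
        = {x : ℝ | (x+b)^2 < (s/t) ^ ((2:ℝ)/3) - s} := by
    intro b t ht
    ext x
    simp only [mem_setOf_eq]
    have hA : (0:ℝ) < (x+b)^2 + s := by positivity
    have hD : (0:ℝ) < ((x+b)^2 + s) ^ ((3:ℝ)/2) := Real.rpow_pos_of_pos hA _
    rw [lt_div_iff₀' hD, ← lt_div_iff₀ ht, lt_sub_iff_add_lt]
    constructor
    · intro h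
      have h2 := Real.rpow_lt_rpow (Real.rpow_nonneg hA.le _) h (by norm_num : (0:ℝ) < 2/3)
      rwa [← Real.rpow_mul hA.le, show (3:ℝ)/2 * (2/3) = 1 by norm_num, Real.rpow_one] at h2
    · intro h
      have h2 := Real.rpow_lt_rpow hA.le h (by norm_num : (0:ℝ) < 3/2)
      rwa [← Real.rpow_mul (by positivity : (0:ℝ) ≤ s/t),
        show (2:ℝ)/3 * (3/2) = 1 by norm_num, Real.rpow_one] at h2
  have lc : ∀ b : ℝ,
      ∫⁻ x, ENNReal.ofReal (s / ((x+b)^2 + s) ^ ((3:ℝ)/2)) ∂(gaussianReal 0 1)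
        = ∫⁻ t in Ioi 0, gaussianReal 0 1 {x | t < s / ((x+b)^2 + s) ^ ((3:ℝ)/2)} := by
    intro b
    exact lintegral_eq_lintegral_meas_lt _ (ae_of_all _ (g_nonneg hs.le b)) meas_g.aemeasurable
  have lc0 :
      ∫⁻ x, ENNReal.ofReal (s / (x^2 + s) ^ ((3:ℝ)/2)) ∂(gaussianReal 0 1)
        = ∫⁻ t in Ioi 0, gaussianReal 0 1 {x | t < s / ((x+0)^2 + s) ^ ((3:ℝ)/2)} := by
    rw [← lc 0]; simp
  rw [lc b, lc0]
  apply lintegral_mono_ae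
  rw [ae_restrict_iff' measurableSet_Ioi]
  apply ae_of_all
  intro t ht
  rw [hset b t ht, hset 0 t ht]
  have := gauss_set_le ((s/t) ^ ((2:ℝ)/3) - s) b
  convert this using 3 <;> simp

lemma aux_int : Integrable (fun u : ℝ => (((1:ℝ) + u^2) ^ ((3:ℝ)/2))⁻¹) ∧
    (∫ u : ℝ, (((1:ℝ) + u^2) ^ ((3:ℝ)/2))⁻¹) ≤ π := by
  have hcont : Continuous (fun u : ℝ => (((1:ℝ) + u^2) ^ ((3:ℝ)/2))⁻¹) := by
    apply Continuous.inv₀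
    · exact (continuous_const.add (continuous_pow 2)).rpow_const (fun x => Or.inr (by norm_num))
    · intro x; positivity
  have hle : ∀ u : ℝ, (((1:ℝ) + u^2) ^ ((3:ℝ)/2))⁻¹ ≤ ((1:ℝ) + u^2)⁻¹ := by
    intro u
    have h1 : (1:ℝ) + u^2 ≤ ((1:ℝ) + u^2) ^ ((3:ℝ)/2) := by
      nth_rewrite 1 [show (1:ℝ) + u^2 = ((1:ℝ)+u^2) ^ (1:ℝ) by rw [Real.rpow_one]]
      exact Real.rpow_le_rpow_of_exponent_le (by nlinarith [sq_nonneg u]) (by norm_num)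
    exact inv_anti₀ (by positivity) h1
  have hint : Integrable (fun u : ℝ => (((1:ℝ) + u^2) ^ ((3:ℝ)/2))⁻¹) := by
    apply integrable_inv_one_add_sq.mono' hcont.aestronglyMeasurable
    apply ae_of_all
    intro u
    rw [Real.norm_eq_abs, abs_of_nonneg (by positivity)]
    exact hle u
  refine ⟨hint, ?_⟩
  calc (∫ u : ℝ, (((1:ℝ) + u^2) ^ ((3:ℝ)/2))⁻¹) ≤ ∫ u : ℝ, ((1:ℝ) + u^2)⁻¹ :=
        integral_mono hint integrable_inv_one_add_sq hle
    _ = π := integral_univ_inv_one_add_sq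

lemma oneD_bound {s : ℝ} (hs : 0 ≤ s) :
    ∫⁻ x, ENNReal.ofReal (s / (x^2 + s) ^ ((3:ℝ)/2)) ∂(gaussianReal 0 1)
      ≤ ENNReal.ofReal π := by
  rcases eq_or_lt_of_le hs with rfl | hs
  · simp
  set c := Real.sqrt s with hcdef
  have hc : 0 < c := Real.sqrt_pos.2 hs
  have hc2 : c^2 = s := Real.sq_sqrt hs.le
  set h : ℝ → ℝ := fun u => (((1:ℝ) + u^2) ^ ((3:ℝ)/2))⁻¹ with hh
  have hfeq : ∀ x : ℝ, s / (x^2 + s) ^ ((3:ℝ)/2) = c⁻¹ * h (c⁻¹ * x) := by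
    intro x
    have h1 : (1:ℝ) + (c⁻¹ * x)^2 = (x^2 + s) / s := by
      field_simp [hc2]
      rw [hc2]; ring
    have h2 : ((x^2+s)/s) ^ ((3:ℝ)/2) = (x^2+s) ^ ((3:ℝ)/2) / s ^ ((3:ℝ)/2) :=
      Real.div_rpow (by positivity) hs.le _
    have h3 : c⁻¹ * s ^ ((3:ℝ)/2) = s := by
      rw [hcdef, Real.sqrt_eq_rpow, ← Real.rpow_neg_one (s ^ (1/(2:ℝ))), ← Real.rpow_mul hs.le,
        ← Real.rpow_add hs]
      norm_num
    rw [hh]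
    simp only
    rw [h1, h2, inv_div, mul_div_assoc', h3]
  have hmeas : Measurable fun x : ℝ => ENNReal.ofReal (s / (x ^ 2 + s) ^ ((3:ℝ)/2)) := by
    apply Measurable.ennreal_ofReal
    apply Measurable.div measurable_const
    exact ((measurable_id'.pow_const 2).add_const s).pow measurable_const
  have hint2 : Integrable (fun x : ℝ => h (c⁻¹ * x)) := by
    rw [integrable_comp_mul_left_iff h (inv_ne_zero hc.ne')]
    exact aux_int.1
  have hintf : Integrable (fun x : ℝ => s / (x^2 + s) ^ ((3:ℝ)/2)) := by
    simp only [hfeq]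
    exact hint2.const_mul _
  have hval : (∫ x : ℝ, s / (x^2 + s) ^ ((3:ℝ)/2))
      = ∫ u : ℝ, h u := by
    simp only [hfeq]
    rw [integral_const_mul, Measure.integral_comp_mul_left h c⁻¹, inv_inv, abs_of_pos hc,
      smul_eq_mul, inv_mul_cancel_left₀ hc.ne']
  calc ∫⁻ x, ENNReal.ofReal (s / (x^2 + s) ^ ((3:ℝ)/2)) ∂(gaussianReal 0 1)
      ≤ ∫⁻ x, ENNReal.ofReal (s / (x^2 + s) ^ ((3:ℝ)/2)) ∂(volume : Measure ℝ) := by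
        rw [gaussianReal_of_var_ne_zero 0 one_ne_zero,
          lintegral_withDensity_eq_lintegral_mul volume (measurable_gaussianPDF 0 1) hmeas]
        apply lintegral_mono
        intro x
        have hpdf : gaussianPDF 0 1 x ≤ 1 := by
          rw [gaussianPDF]
          refine ENNReal.ofReal_le_one.2 ?_
          rw [gaussianPDFReal]
          simp only [NNReal.coe_one, mul_one, sub_zero]
          have h1 : (1:ℝ) ≤ Real.sqrt (2 * π) := by
            rw [Real.one_le_sqrt]
            nlinarith [pi_gt_three]
          have h2 : rexp (-x^2 / 2) ≤ 1 := by
            rw [Real.exp_le_one_iff]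
            nlinarith [sq_nonneg x]
          calc (Real.sqrt (2 * π))⁻¹ * rexp (-x^2 / 2)
              ≤ 1 * 1 := by
                apply mul_le_mul _ h2 (by positivity) (by norm_num)
                exact inv_le_one_of_one_le₀ h1
            _ = 1 := by norm_num
        simpa using mul_le_mul_left hpdf _
    _ = ENNReal.ofReal (∫ x : ℝ, s / (x^2 + s) ^ ((3:ℝ)/2)) := by
        rw [ofReal_integral_eq_lintegral_ofReal hintf
          (ae_of_all _ fun x => div_nonneg hs.le (Real.rpow_nonneg (by positivity) _))]
    _ ≤ ENNReal.ofReal π := ENNReal.ofReal_le_ofReal (hval ▸ aux_int.2)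

/-- For k ≥ 2, a ↦ E[(ξ₂²+…+ξ_k²)/((ξ₁+a)²+ξ₂²+…+ξ_k²)^{3/2}]
attains its maximum over ℝ at a = 0. -/
theorem stmt_7 (k : ℕ) (hk : 2 ≤ k) (a : ℝ) :
    (∫ x : Fin k → ℝ,
        (∑ i ∈ Finset.univ.erase (⟨0, by omega⟩ : Fin k), (x i) ^ 2)
          / ((x ⟨0, by omega⟩ + a) ^ 2
              + ∑ i ∈ Finset.univ.erase (⟨0, by omega⟩ : Fin k), (x i) ^ 2) ^ ((3 : ℝ) / 2)
        ∂(Measure.pi fun _ : Fin k => gaussianReal 0 1))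
      ≤ ∫ x : Fin k → ℝ,
        (∑ i ∈ Finset.univ.erase (⟨0, by omega⟩ : Fin k), (x i) ^ 2)
          / ((x ⟨0, by omega⟩ + 0) ^ 2
              + ∑ i ∈ Finset.univ.erase (⟨0, by omega⟩ : Fin k), (x i) ^ 2) ^ ((3 : ℝ) / 2)
        ∂(Measure.pi fun _ : Fin k => gaussianReal 0 1) := by
  obtain ⟨n, rfl⟩ : ∃ n, k = n + 1 := ⟨k - 1, by omega⟩
  set μ := Measure.pi fun _ : Fin (n+1) => gaussianReal 0 1 with hμ
  set ν := Measure.pi fun _ : Fin n => gaussianReal 0 1 with hν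
  set S : (Fin n → ℝ) → ℝ := fun y => ∑ j, (y j)^2 with hS
  have hSnn : ∀ y, 0 ≤ S y := fun y => Finset.sum_nonneg fun j _ => sq_nonneg _
  set F : ℝ → (Fin (n+1) → ℝ) → ℝ := fun b x =>
    (∑ i ∈ Finset.univ.erase (0 : Fin (n+1)), (x i)^2) /
      ((x 0 + b)^2 + ∑ i ∈ Finset.univ.erase (0 : Fin (n+1)), (x i)^2) ^ ((3:ℝ)/2) with hF
  show ∫ x, F a x ∂μ ≤ ∫ x, F 0 x ∂μ
  have hsum : ∀ x : Fin (n+1) → ℝ, (∑ i ∈ Finset.univ.erase (0 : Fin (n+1)), (x i)^2)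
      = S (fun j => x j.succ) := by
    intro x
    have h1 : ∑ i : Fin (n+1), (x i)^2 = (x 0)^2 + ∑ j : Fin n, (x j.succ)^2 :=
      Fin.sum_univ_succ (fun i => (x i)^2)
    have h2 : (x 0)^2 + ∑ i ∈ Finset.univ.erase (0 : Fin (n+1)), (x i)^2
        = ∑ i : Fin (n+1), (x i)^2 :=
      Finset.add_sum_erase Finset.univ (fun i => (x i)^2) (Finset.mem_univ (0 : Fin (n+1)))
    simp only [hS]
    linarith
  have hSmeas : Measurable S := by
    apply Finset.measurable_sum
    intro j _
    exact (measurable_pi_apply j).pow_const 2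
  have hFnn : ∀ b x, 0 ≤ F b x := fun b x =>
    div_nonneg (Finset.sum_nonneg fun i _ => sq_nonneg _) (Real.rpow_nonneg (by positivity) _)
  have hFmeas : ∀ b, Measurable (F b) := by
    intro b
    apply Measurable.div
    · apply Finset.measurable_sum
      intro i _
      exact (measurable_pi_apply i).pow_const 2
    · have hd1 : Measurable fun x : Fin (n+1) → ℝ => (x 0 + b)^2 := by
        fun_prop
      have hd2 : Measurable fun x : Fin (n+1) → ℝ =>
          ∑ i ∈ Finset.univ.erase (0 : Fin (n+1)), (x i)^2 := by
        apply Finset.measurable_sum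
        intro i _
        exact (measurable_pi_apply i).pow_const 2
      exact (hd1.add hd2).pow measurable_const
  have key : ∀ b : ℝ, ∫⁻ x, ENNReal.ofReal (F b x) ∂μ
      = ∫⁻ y, (∫⁻ t, ENNReal.ofReal (S y / ((t + b)^2 + S y) ^ ((3:ℝ)/2)) ∂(gaussianReal 0 1))
          ∂ν := by
    intro b
    have hmp := measurePreserving_piFinSuccAbove (fun _ : Fin (n+1) => gaussianReal 0 1) 0
    set G : ℝ × (Fin n → ℝ) → ℝ≥0∞ :=
      fun p => ENNReal.ofReal (S p.2 / ((p.1 + b)^2 + S p.2) ^ ((3:ℝ)/2)) with hG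
    have hGmeas : Measurable G := by
      apply Measurable.ennreal_ofReal
      apply Measurable.div (hSmeas.comp measurable_snd)
      apply Measurable.pow _ measurable_const
      exact (((measurable_fst.add_const b).pow_const 2)).add (hSmeas.comp measurable_snd)
    have hcomp : ∀ x : Fin (n+1) → ℝ, ENNReal.ofReal (F b x)
        = G ((MeasurableEquiv.piFinSuccAbove (fun _ : Fin (n+1) => ℝ) 0) x) := by
      intro x
      have he : (MeasurableEquiv.piFinSuccAbove (fun _ : Fin (n+1) => ℝ) 0) x
          = (x 0, fun j => x j.succ) := by
        simp only [MeasurableEquiv.piFinSuccAbove, MeasurableEquiv.coe_mk,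
          Equiv.symm_symm]
        rfl
      rw [he, hG, hF]
      simp only [hsum x]
    calc ∫⁻ x, ENNReal.ofReal (F b x) ∂μ
        = ∫⁻ x, G ((MeasurableEquiv.piFinSuccAbove (fun _ : Fin (n+1) => ℝ) 0) x) ∂μ := by
          exact lintegral_congr hcomp
      _ = ∫⁻ p, G p ∂((gaussianReal 0 1).prod ν) := hmp.lintegral_comp hGmeas
      _ = ∫⁻ y, ∫⁻ t, G (t, y) ∂(gaussianReal 0 1) ∂ν := lintegral_prod_symm' G hGmeas
  have hrepr : ∀ b, ∫ x, F b x ∂μ = (∫⁻ x, ENNReal.ofReal (F b x) ∂μ).toReal := fun b =>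
    integral_eq_lintegral_of_nonneg_ae (ae_of_all _ (hFnn b)) (hFmeas b).aestronglyMeasurable
  have L_le : ∫⁻ x, ENNReal.ofReal (F a x) ∂μ ≤ ∫⁻ x, ENNReal.ofReal (F 0 x) ∂μ := by
    rw [key a, key 0]
    refine lintegral_mono fun y => ?_
    simp only [add_zero]
    exact oneD_le (hSnn y) a
  have L_fin : ∫⁻ x, ENNReal.ofReal (F 0 x) ∂μ ≤ ENNReal.ofReal π := by
    rw [key 0]
    calc ∫⁻ y, (∫⁻ t, ENNReal.ofReal (S y / ((t + 0)^2 + S y) ^ ((3:ℝ)/2))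
            ∂(gaussianReal 0 1)) ∂ν
        ≤ ∫⁻ _, ENNReal.ofReal π ∂ν := by
          refine lintegral_mono fun y => ?_
          simp only [add_zero]
          exact oneD_bound (hSnn y)
      _ = ENNReal.ofReal π := by
          simp [lintegral_const]
  rw [hrepr a, hrepr 0]
  exact ENNReal.toReal_mono (lt_of_le_of_lt L_fin ENNReal.ofReal_lt_top).ne L_le
end

section
/- For every m ≥ 1, ∫_0^∞ ρ^{m-1}/(1+ρ²)^{(m+1)/2} dρ > e^{-2}/√m. -/
open MeasureTheory Real

/-- For every m ≥ 1, ∫₀^∞ ρ^{m-1}/(1+ρ²)^{(m+1)/2} dρ > e^{-2}/√m. -/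
theorem stmt_8 (m : ℕ) (hm : 1 ≤ m) :
    Real.exp (-2) / Real.sqrt m
      < ∫ ρ in Set.Ioi (0 : ℝ), ρ ^ (m - 1) / (1 + ρ ^ 2) ^ (((m : ℝ) + 1) / 2) := by
  have hm1 : (1 : ℝ) ≤ (m : ℝ) := by exact_mod_cast hm
  have hmpos : (0 : ℝ) < (m : ℝ) := by linarith
  set s : ℝ := ((m : ℝ) + 1) / 2 with hs_def
  have hs_pos : 0 < s := by positivity
  set f : ℝ → ℝ := fun ρ => ρ ^ (m - 1) / (1 + ρ ^ 2) ^ s with hf_def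
  have hden : ∀ ρ : ℝ, (0 : ℝ) < (1 + ρ ^ 2) ^ s := by
    intro ρ
    have : (0 : ℝ) < 1 + ρ ^ 2 := by positivity
    positivity
  have hcont : Continuous f := by
    apply Continuous.div
    · exact continuous_pow _
    · exact (continuous_const.add (continuous_pow 2)).rpow_const
        (fun x => Or.inr hs_pos.le)
    · intro x; exact (hden x).ne'
  -- the key denominator bound for ρ ≥ 1 (in particular ρ > 0):
  have hden_ge : ∀ ρ : ℝ, 0 < ρ → (ρ : ℝ) ^ (m + 1) ≤ (1 + ρ ^ 2) ^ s := by
    intro ρ hρ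
    have h1 : (ρ ^ 2 : ℝ) ^ s ≤ (1 + ρ ^ 2) ^ s := by
      apply Real.rpow_le_rpow (by positivity) (by linarith [sq_nonneg ρ]) hs_pos.le
    have h2 : (ρ ^ 2 : ℝ) ^ s = ρ ^ (m + 1) := by
      rw [← Real.rpow_natCast ρ 2, ← Real.rpow_mul hρ.le, ← Real.rpow_natCast ρ (m + 1)]
      congr 1
      push_cast
      ring
    linarith [h1, h2.ge, h2.le]
  -- integrability on (0, ∞)
  have hInt2 : IntegrableOn f (Set.Ioi (1 : ℝ)) := by
    have hg : IntegrableOn (fun ρ : ℝ => ρ ^ (-2 : ℝ)) (Set.Ioi (1 : ℝ)) :=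
      integrableOn_Ioi_rpow_of_lt (by norm_num) one_pos
    apply hg.integrable.mono hcont.aestronglyMeasurable.restrict
    filter_upwards [ae_restrict_mem measurableSet_Ioi] with ρ hρ
    have hρ1 : (1 : ℝ) < ρ := hρ
    have hρ0 : (0 : ℝ) < ρ := lt_trans one_pos hρ1
    have hb : f ρ ≤ ρ ^ (-2 : ℝ) := by
      have hfle : f ρ ≤ ρ ^ (m - 1) / ρ ^ (m + 1) := by
        apply div_le_div_of_nonneg_left (by positivity) (by positivity) (hden_ge ρ hρ0)
      have heq : ρ ^ (m - 1) / ρ ^ (m + 1) = ρ ^ (-2 : ℝ) := by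
        have hsplit : ρ ^ (m + 1) = ρ ^ (m - 1) * ρ ^ 2 := by
          rw [← pow_add]; congr 1; omega
        rw [hsplit, Real.rpow_neg hρ0.le, show ((2:ℝ)) = ((2:ℕ):ℝ) by norm_num,
          Real.rpow_natCast]
        field_simp
      rw [heq] at hfle; exact hfle
    have hfnn : 0 ≤ f ρ := by
      apply div_nonneg (by positivity) (hden ρ).le
    rw [Real.norm_eq_abs, Real.norm_eq_abs, abs_of_nonneg hfnn,
      abs_of_nonneg (Real.rpow_nonneg hρ0.le _)]
    exact hb
  have hInt1 : IntegrableOn f (Set.Ioc (0 : ℝ) 1) := hcont.integrableOn_Ioc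
  have hIntf : IntegrableOn f (Set.Ioi (0 : ℝ)) := by
    rw [← Set.Ioc_union_Ioi_eq_Ioi (zero_le_one)]
    exact hInt1.union hInt2
  -- the square-root point
  have hsq_pos : 0 < Real.sqrt m := Real.sqrt_pos.mpr hmpos
  have hsq_ge1 : (1 : ℝ) ≤ Real.sqrt m := by
    rw [show (1:ℝ) = Real.sqrt 1 by simp]
    exact Real.sqrt_le_sqrt hm1
  -- pointwise bound on Ioi √m
  have hkey : ∀ ρ ∈ Set.Ioi (Real.sqrt m), Real.exp (-1) * ρ ^ (-2 : ℝ) ≤ f ρ := by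
    intro ρ hρ
    have hρs : Real.sqrt m < ρ := hρ
    have hρ0 : (0 : ℝ) < ρ := lt_of_lt_of_le hsq_pos hρs.le
    have hρ2 : (m : ℝ) < ρ ^ 2 := by
      have := Real.sq_sqrt hmpos.le
      nlinarith [hρs, hsq_pos]
    -- (1+ρ²)^s ≤ ρ^(m+1) * e
    have hA : (1 : ℝ) + ρ ^ 2 ≤ ρ ^ 2 * (1 + 1 / m) := by
      have h1 : (1 : ℝ) ≤ ρ ^ 2 / m := (one_le_div hmpos).2 hρ2.le
      have h2 : ρ ^ 2 * (1 + 1 / m) = ρ ^ 2 + ρ ^ 2 / m := by ring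
      linarith [h1, (div_le_iff₀ hmpos).1 (le_refl (ρ^2/m))]
    have hB : ((1 : ℝ) + ρ ^ 2) ^ s ≤ (ρ ^ 2) ^ s * ((1 + 1 / m) ^ s) := by
      calc ((1 : ℝ) + ρ ^ 2) ^ s ≤ (ρ ^ 2 * (1 + 1 / m)) ^ s :=
            Real.rpow_le_rpow (by positivity) hA hs_pos.le
        _ = (ρ ^ 2) ^ s * ((1 + 1 / m) ^ s) :=
            Real.mul_rpow (by positivity) (by positivity)
    have hD : (ρ ^ 2 : ℝ) ^ s = ρ ^ (m + 1) := by
      rw [← Real.rpow_natCast ρ 2, ← Real.rpow_mul hρ0.le, ← Real.rpow_natCast ρ (m + 1)]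
      congr 1; push_cast; ring
    have hE : ((1 : ℝ) + 1 / m) ^ s ≤ Real.exp 1 := by
      have h1 : (1 : ℝ) + 1 / m ≤ Real.exp (1 / m) := by
        have := Real.add_one_le_exp (1 / (m : ℝ))
        linarith
      have h2 : ((1 : ℝ) + 1 / m) ^ s ≤ Real.exp (1 / m) ^ s :=
        Real.rpow_le_rpow (by positivity) h1 hs_pos.le
      have h3 : Real.exp (1 / m) ^ s = Real.exp ((1 / m) * s) := by
        rw [Real.exp_mul]
      have h4 : (1 / (m : ℝ)) * s ≤ 1 := by
        rw [hs_def]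
        rw [div_mul_div_comm, one_mul, div_le_one (by positivity)]
        linarith
      calc ((1 : ℝ) + 1 / m) ^ s ≤ Real.exp (1 / m) ^ s := h2
        _ = Real.exp ((1 / m) * s) := h3
        _ ≤ Real.exp 1 := Real.exp_le_exp.2 h4
    have hC : ((1 : ℝ) + ρ ^ 2) ^ s ≤ ρ ^ (m + 1) * Real.exp 1 := by
      calc ((1 : ℝ) + ρ ^ 2) ^ s ≤ (ρ ^ 2) ^ s * ((1 + 1 / m) ^ s) := hB
        _ ≤ (ρ ^ 2) ^ s * Real.exp 1 := by
            apply mul_le_mul_of_nonneg_left hE (Real.rpow_nonneg (by positivity) _)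
        _ = ρ ^ (m + 1) * Real.exp 1 := by rw [hD]
    -- conclude
    have heq : Real.exp (-1) * ρ ^ (-2 : ℝ) = ρ ^ (m - 1) / (ρ ^ (m + 1) * Real.exp 1) := by
      have hsplit : ρ ^ (m + 1) = ρ ^ (m - 1) * ρ ^ 2 := by
        rw [← pow_add]; congr 1; omega
      rw [hsplit, Real.exp_neg, Real.rpow_neg hρ0.le,
        show ((2:ℝ)) = ((2:ℕ):ℝ) by norm_num, Real.rpow_natCast]
      field_simp
    rw [heq]
    apply div_le_div_of_nonneg_left (by positivity) (hden ρ) hC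
  -- comparison integral
  have hgInt : IntegrableOn (fun ρ : ℝ => Real.exp (-1) * ρ ^ (-2 : ℝ))
      (Set.Ioi (Real.sqrt m)) :=
    (integrableOn_Ioi_rpow_of_lt (by norm_num) hsq_pos).const_mul _
  have hIntf' : IntegrableOn f (Set.Ioi (Real.sqrt m)) :=
    hIntf.mono_set (Set.Ioi_subset_Ioi hsq_pos.le)
  have h1 : ∫ ρ in Set.Ioi (Real.sqrt m), Real.exp (-1) * ρ ^ (-2 : ℝ)
      ≤ ∫ ρ in Set.Ioi (Real.sqrt m), f ρ :=
    setIntegral_mono_on hgInt hIntf' measurableSet_Ioi hkey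
  have h2 : ∫ ρ in Set.Ioi (Real.sqrt m), f ρ ≤ ∫ ρ in Set.Ioi (0 : ℝ), f ρ := by
    apply setIntegral_mono_set hIntf
    · filter_upwards [ae_restrict_mem measurableSet_Ioi] with ρ hρ
      exact div_nonneg (pow_nonneg (le_of_lt hρ) _) (hden ρ).le
    · exact HasSubset.Subset.eventuallyLE (Set.Ioi_subset_Ioi hsq_pos.le)
  have hval : ∫ ρ in Set.Ioi (Real.sqrt m), Real.exp (-1) * ρ ^ (-2 : ℝ)
      = Real.exp (-1) / Real.sqrt m := by
    rw [MeasureTheory.integral_const_mul,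
      integral_Ioi_rpow_of_lt (by norm_num : (-2:ℝ) < -1) hsq_pos]
    rw [show (-2 : ℝ) + 1 = -1 by norm_num, Real.rpow_neg_one]
    field_simp
  have hlt : Real.exp (-2) / Real.sqrt m < Real.exp (-1) / Real.sqrt m :=
    (div_lt_div_iff_of_pos_right hsq_pos).2 (Real.exp_lt_exp.2 (by norm_num))
  calc Real.exp (-2) / Real.sqrt m < Real.exp (-1) / Real.sqrt m := hlt
    _ = ∫ ρ in Set.Ioi (Real.sqrt m), Real.exp (-1) * ρ ^ (-2 : ℝ) := hval.symm
    _ ≤ ∫ ρ in Set.Ioi (Real.sqrt m), f ρ := h1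
    _ ≤ ∫ ρ in Set.Ioi (0 : ℝ), f ρ := h2
end

section
/- For every m ≥ 1 and r > 0, ∫_0^r ρ^{m-1}/(1+ρ²)^{(m+1)/2} dρ ≤ (π/2)·(r²/(1+r²))^{(m-1)/2}. -/
open MeasureTheory Real

/-- For every m ≥ 1 and r > 0,
∫₀^r ρ^{m-1}/(1+ρ²)^{(m+1)/2} dρ ≤ (π/2)·(r²/(1+r²))^{(m-1)/2}. -/
theorem stmt_9 (m : ℕ) (hm : 1 ≤ m) (r : ℝ) (hr : 0 < r) :
    (∫ ρ in (0 : ℝ)..r, ρ ^ (m - 1) / (1 + ρ ^ 2) ^ (((m : ℝ) + 1) / 2))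
      ≤ π / 2 * (r ^ 2 / (1 + r ^ 2)) ^ (((m : ℝ) - 1) / 2) := by
  set e : ℝ := ((m : ℝ) - 1) / 2 with he
  set C : ℝ := (r ^ 2 / (1 + r ^ 2)) ^ e with hC
  have hm1 : (1 : ℝ) ≤ (m : ℝ) := by exact_mod_cast hm
  have hme : (0 : ℝ) ≤ e := by rw [he]; linarith
  have hpos : ∀ x : ℝ, (0 : ℝ) < 1 + x ^ 2 := fun x => by positivity
  have hCnn : 0 ≤ C := by
    rw [hC]; exact Real.rpow_nonneg (div_nonneg (sq_nonneg r) (hpos r).le) e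
  have hcont : Continuous fun ρ : ℝ => ρ ^ (m - 1) / (1 + ρ ^ 2) ^ (((m : ℝ) + 1) / 2) := by
    apply Continuous.div (continuous_pow (m - 1))
    · exact (continuous_const.add (continuous_pow 2)).rpow_const
        fun x => Or.inl (hpos x).ne'
    · intro x
      exact (Real.rpow_pos_of_pos (hpos x) _).ne'
  have hint1 : IntervalIntegrable
      (fun ρ : ℝ => ρ ^ (m - 1) / (1 + ρ ^ 2) ^ (((m : ℝ) + 1) / 2)) volume 0 r :=
    hcont.intervalIntegrable 0 r
  have hcont2 : Continuous fun ρ : ℝ => C * (1 / (1 + ρ ^ 2)) := by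
    apply continuous_const.mul
    exact continuous_const.div (continuous_const.add (continuous_pow 2))
      fun x => (hpos x).ne'
  have hint2 : IntervalIntegrable (fun ρ : ℝ => C * (1 / (1 + ρ ^ 2))) volume 0 r :=
    hcont2.intervalIntegrable 0 r
  have key : ∀ ρ ∈ Set.Icc (0 : ℝ) r,
      ρ ^ (m - 1) / (1 + ρ ^ 2) ^ (((m : ℝ) + 1) / 2) ≤ C * (1 / (1 + ρ ^ 2)) := by
    intro ρ hρ
    obtain ⟨h0, h1⟩ := hρ
    have hden := hpos ρ
    have hnum : (ρ ^ 2 : ℝ) ^ e = ρ ^ (m - 1) := by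
      rw [← Real.rpow_natCast ρ 2, ← Real.rpow_mul h0]
      rw [show ((2 : ℕ) : ℝ) * e = ((m - 1 : ℕ) : ℝ) by
        push_cast [hm]; rw [he]; ring]
      exact Real.rpow_natCast ρ (m - 1)
    have hsplit : (1 + ρ ^ 2) ^ (((m : ℝ) + 1) / 2)
        = (1 + ρ ^ 2) ^ e * (1 + ρ ^ 2) := by
      rw [show ((m : ℝ) + 1) / 2 = e + 1 by rw [he]; ring,
        Real.rpow_add hden, Real.rpow_one]
    have heq : ρ ^ (m - 1) / (1 + ρ ^ 2) ^ (((m : ℝ) + 1) / 2)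
        = (ρ ^ 2 / (1 + ρ ^ 2)) ^ e * (1 / (1 + ρ ^ 2)) := by
      rw [hsplit, Real.div_rpow (sq_nonneg ρ) hden.le, hnum]
      field_simp
    rw [heq]
    have hb : ρ ^ 2 / (1 + ρ ^ 2) ≤ r ^ 2 / (1 + r ^ 2) := by
      rw [div_le_div_iff₀ (hpos ρ) (hpos r)]
      nlinarith
    have : (ρ ^ 2 / (1 + ρ ^ 2)) ^ e ≤ C := by
      rw [hC]
      exact Real.rpow_le_rpow (div_nonneg (sq_nonneg ρ) hden.le) hb hme
    exact mul_le_mul_of_nonneg_right this (by positivity)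
  calc (∫ ρ in (0 : ℝ)..r, ρ ^ (m - 1) / (1 + ρ ^ 2) ^ (((m : ℝ) + 1) / 2))
      ≤ ∫ ρ in (0 : ℝ)..r, C * (1 / (1 + ρ ^ 2)) :=
        intervalIntegral.integral_mono_on hr.le hint1 hint2 key
    _ = C * arctan r := by
        rw [intervalIntegral.integral_const_mul, integral_one_div_one_add_sq,
          Real.arctan_zero, sub_zero]
    _ ≤ C * (π / 2) := mul_le_mul_of_nonneg_left (Real.arctan_lt_pi_div_two r).le hCnn
    _ = π / 2 * C := mul_comm _ _
end

section
/- Let P(t) = ‖t‖^d − r^d on ℝ^m with d even and r > 0, and Q(u) = (1+u)^d. Then for all t ∈ ℝ^m, ‖∇(P(t)/√(Q(‖t‖²)))‖ ≤ d(1 + r^d)/(1+‖t‖²)^{3/2}. -/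
open Real

lemma grad_comp_sq {m : ℕ} (F : ℝ → ℝ) (c : ℝ) (t : EuclideanSpace ℝ (Fin m))
    (hF : HasDerivAt F c (‖t‖ ^ 2)) :
    HasGradientAt (fun s : EuclideanSpace ℝ (Fin m) => F (‖s‖ ^ 2)) ((2 * c) • t) t := by
  have h1 : HasFDerivAt (fun s : EuclideanSpace ℝ (Fin m) => ‖s‖ ^ 2)
      (2 • innerSL ℝ t) t := (hasStrictFDerivAt_norm_sq t).hasFDerivAt
  have h3 := hF.hasFDerivAt.comp t h1
  rw [hasGradientAt_iff_hasFDerivAt]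
  convert h3 using 1
  case e'_8 => rfl
  case e'_9 => rfl
  case e'_11 => rfl
  ext y
  simp [InnerProductSpace.toDual_apply_apply, real_inner_smul_left, ContinuousLinearMap.smul_apply]
  ring

/-- For P(t) = ‖t‖^d − r^d on ℝ^m with d even, r > 0, and Q(u) = (1+u)^d:
‖∇(P/√(Q(‖t‖²)))(t)‖ ≤ d(1+r^d)/(1+‖t‖²)^{3/2} for all t. -/
theorem stmt_16 (m d : ℕ) (hd : Even d) (r : ℝ) (hr : 0 < r) :
    ∀ t : EuclideanSpace ℝ (Fin m),
      ‖gradient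
          (fun s : EuclideanSpace ℝ (Fin m) =>
            (‖s‖ ^ d - r ^ d) / Real.sqrt ((1 + ‖s‖ ^ 2) ^ d)) t‖
        ≤ d * (1 + r ^ d) / (1 + ‖t‖ ^ 2) ^ ((3 : ℝ) / 2) := by
  intro t
  obtain ⟨k, hk⟩ := hd
  have hd2 : d = 2 * k := by omega
  subst hd2
  rcases Nat.eq_zero_or_pos k with hk0 | hkpos
  · subst hk0
    simp only [Nat.mul_zero, pow_zero, sub_self, zero_div, Nat.cast_zero, zero_mul]
    rw [gradient_fun_const]
    simp [le_div_iff₀ (by positivity : (0:ℝ) < (1 + ‖t‖ ^ 2) ^ ((3:ℝ)/2))]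
  obtain ⟨j, rfl⟩ : ∃ j, k = j + 1 := ⟨k - 1, by omega⟩
  set u : ℝ := ‖t‖ ^ 2 with hu
  set A : ℝ := 1 + u with hA
  have hApos : (0:ℝ) < A := by positivity
  have hA1 : (1:ℝ) ≤ A := by nlinarith [sq_nonneg ‖t‖]
  set R : ℝ := r ^ (2 * (j + 1)) with hR
  have hfun : (fun s : EuclideanSpace ℝ (Fin m) =>
      (‖s‖ ^ (2 * (j + 1)) - r ^ (2 * (j + 1))) / Real.sqrt ((1 + ‖s‖ ^ 2) ^ (2 * (j + 1))))
      = fun s : EuclideanSpace ℝ (Fin m) =>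
        ((‖s‖ ^ 2) ^ (j + 1) - R) / ((1 + ‖s‖ ^ 2) ^ (j + 1)) := by
    funext s
    have h1 : Real.sqrt ((1 + ‖s‖ ^ 2) ^ (2 * (j + 1))) = (1 + ‖s‖ ^ 2) ^ (j + 1) := by
      rw [mul_comm, pow_mul, Real.sqrt_sq (by positivity)]
    rw [h1, pow_mul]
  rw [hfun]
  set c : ℝ := (((j:ℝ) + 1) * u ^ j * A ^ (j + 1)
      - (u ^ (j + 1) - R) * (((j:ℝ) + 1) * A ^ j * 1)) / (A ^ (j + 1)) ^ 2 with hc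
  have hF : HasDerivAt (fun v : ℝ => (v ^ (j + 1) - R) / ((1 + v) ^ (j + 1))) c u := by
    have hnum : HasDerivAt (fun v : ℝ => v ^ (j + 1) - R) (((j:ℝ) + 1) * u ^ j) u := by
      simpa using (hasDerivAt_pow (j + 1) u).sub_const R
    have hden : HasDerivAt (fun v : ℝ => (1 + v) ^ (j + 1)) (((j:ℝ) + 1) * A ^ j * 1) u := by
      simpa [hA] using ((hasDerivAt_id u).const_add 1).fun_pow (j + 1)
    exact hnum.div hden (by positivity)
  rw [(grad_comp_sq _ c t hF).gradient]
  have hRpos : 0 < R := by positivity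
  have hcval : c = ((j:ℝ) + 1) * (u ^ j + R) / A ^ (j + 2) := by
    rw [hc]
    have hAne : A ≠ 0 := ne_of_gt hApos
    field_simp
    ring
  have hcnn : 0 ≤ c := by rw [hcval]; positivity
  rw [norm_smul, Real.norm_eq_abs, abs_of_nonneg (by linarith)]
  have hrpow : A ^ ((3:ℝ)/2) = A * Real.sqrt A := by
    rw [show (3:ℝ)/2 = 1 + 1/2 by norm_num, Real.rpow_add hApos, Real.rpow_one,
      Real.sqrt_eq_rpow]
  rw [hrpow, hcval]
  have hx : ‖t‖ * Real.sqrt A ≤ A := by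
    have h1 : ‖t‖ ≤ Real.sqrt A := by
      rw [show ‖t‖ = Real.sqrt (‖t‖ ^ 2) from (Real.sqrt_sq (norm_nonneg t)).symm]
      exact Real.sqrt_le_sqrt (by simp [hA, hu])
    calc ‖t‖ * Real.sqrt A ≤ Real.sqrt A * Real.sqrt A :=
          mul_le_mul_of_nonneg_right h1 (Real.sqrt_nonneg A)
      _ = A := Real.mul_self_sqrt hApos.le
  have hujA : u ^ j + R ≤ (1 + R) * A ^ j := by
    have h1 : u ^ j ≤ A ^ j := pow_le_pow_left₀ (by positivity) (by linarith) j
    have h2 : R ≤ R * A ^ j := le_mul_of_one_le_right hRpos.le (one_le_pow₀ hA1)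
    nlinarith
  have key : (((j:ℝ) + 1) * (u ^ j + R)) * (‖t‖ * Real.sqrt A)
      ≤ (((j:ℝ) + 1) * ((1 + R) * A ^ j)) * A :=
    mul_le_mul (mul_le_mul_of_nonneg_left hujA (by positivity)) hx (by positivity) (by positivity)
  rw [show 2 * (((j:ℝ) + 1) * (u ^ j + R) / A ^ (j + 2)) * ‖t‖
      = (2 * (((j:ℝ) + 1) * (u ^ j + R)) * ‖t‖) / A ^ (j + 2) by ring]
  rw [div_le_div_iff₀ (by positivity) (by positivity)]
  push_cast
  calc 2 * (((j:ℝ) + 1) * (u ^ j + R)) * ‖t‖ * (A * Real.sqrt A)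
      = 2 * ((((j:ℝ) + 1) * (u ^ j + R)) * (‖t‖ * Real.sqrt A)) * A := by ring
    _ ≤ 2 * ((((j:ℝ) + 1) * ((1 + R) * A ^ j)) * A) * A := by
        exact mul_le_mul_of_nonneg_right (mul_le_mul_of_nonneg_left key (by norm_num)) hApos.le
    _ = 2 * ((j:ℝ) + 1) * (1 + R) * A ^ (j + 2) := by ring
end

section
/- Let P be a polynomial on ℝ^m of degree d, and Q(u) = Σ_{k=0}^d c_k u^k with c_k ≥ 0, c_d > 0, Q(u) > 0 for u ≥ 0. Then H(P,Q) := sup_{t∈ℝ^m} (1+‖t‖)·‖∇(P(t)/√(Q(‖t‖²)))‖ is finite. -/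
set_option maxHeartbeats 2000000
set_option synthInstance.maxHeartbeats 400000

open MvPolynomial Finset

section Aux

variable {m : ℕ}

lemma coord_abs_le_norm (t : EuclideanSpace ℝ (Fin m)) (i : Fin m) : |t i| ≤ ‖t‖ := by
  rw [EuclideanSpace.norm_eq]
  have : |t i| = Real.sqrt (t i ^ 2) := (Real.sqrt_sq_eq_abs _).symm
  rw [this]
  apply Real.sqrt_le_sqrt
  have := Finset.single_le_sum (f := fun j => ‖t j‖ ^ 2) (fun j _ => sq_nonneg _) (Finset.mem_univ i)
  simpa [Real.norm_eq_abs, sq_abs] using this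

lemma eval_growth (n : ℕ) (P : MvPolynomial (Fin m) ℝ) (h : P.totalDegree ≤ n) :
    ∃ A : ℝ, 0 ≤ A ∧ ∀ t : EuclideanSpace ℝ (Fin m),
      |MvPolynomial.eval (fun i => t i) P| ≤ A * (1 + ‖t‖) ^ n := by
  refine ⟨∑ s ∈ P.support, |MvPolynomial.coeff s P|,
    Finset.sum_nonneg fun _ _ => abs_nonneg _, fun t => ?_⟩
  have h1 : (1:ℝ) ≤ 1 + ‖t‖ := le_add_of_nonneg_right (norm_nonneg t)
  rw [MvPolynomial.eval_eq]
  refine (Finset.abs_sum_le_sum_abs _ _).trans ?_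
  rw [Finset.sum_mul]
  refine Finset.sum_le_sum fun s hs => ?_
  rw [abs_mul]
  refine mul_le_mul_of_nonneg_left ?_ (abs_nonneg _)
  calc |∏ i ∈ s.support, t i ^ s i|
      ≤ ∏ i ∈ s.support, (1 + ‖t‖) ^ s i := by
        rw [abs_prod]
        refine Finset.prod_le_prod (fun _ _ => abs_nonneg _) fun i _ => ?_
        rw [abs_pow]
        exact pow_le_pow_left₀ (abs_nonneg _) ((coord_abs_le_norm t i).trans
          (le_add_of_nonneg_left zero_le_one)) _
    _ = (1 + ‖t‖) ^ (∑ i ∈ s.support, s i) := Finset.prod_pow_eq_pow_sum _ _ _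
    _ ≤ (1 + ‖t‖) ^ n := pow_le_pow_right₀ h1 ((MvPolynomial.le_totalDegree hs).trans h)

lemma pderiv_totalDegree_le (i : Fin m) (P : MvPolynomial (Fin m) ℝ) (n : ℕ)
    (h : P.totalDegree ≤ n + 1) : (pderiv i P).totalDegree ≤ n := by
  conv_lhs => rw [P.as_sum]
  rw [map_sum]
  refine (totalDegree_finset_sum _ _).trans (Finset.sup_le fun s hs => ?_)
  rw [pderiv_monomial]
  by_cases hsi : s i = 0
  · simp [hsi]
  · refine (totalDegree_monomial_le _ _).trans ?_
    have hle : Finsupp.single i 1 ≤ s := by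
      rw [Finsupp.single_le_iff]; omega
    have hsum : ((s - Finsupp.single i 1).sum fun _ e => e) + 1 = s.sum fun _ e => e := by
      have h2 : (s - Finsupp.single i 1) + Finsupp.single i 1 = s := tsub_add_cancel_of_le hle
      conv_rhs => rw [← h2]
      rw [Finsupp.sum_add_index' (fun _ => rfl) (fun _ _ _ => rfl)]
      simp
    have hdeg : (s.sum fun _ e => e) ≤ n + 1 := (le_totalDegree hs).trans h
    have : ((s - Finsupp.single i 1).sum fun _ e => e) ≤ n := by omega
    exact this

lemma pderiv_eq_zero_of_totalDegree_eq_zero (i : Fin m) (P : MvPolynomial (Fin m) ℝ)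
    (h : P.totalDegree = 0) : pderiv i P = 0 := by
  conv_lhs => rw [P.as_sum]
  rw [map_sum]
  refine Finset.sum_eq_zero fun s hs => ?_
  rw [pderiv_monomial]
  have := (MvPolynomial.totalDegree_eq_zero_iff _ P).1 h s hs i
  simp [this]

lemma hasFDerivAt_eval_poly (P : MvPolynomial (Fin m) ℝ) (t : EuclideanSpace ℝ (Fin m)) :
    HasFDerivAt (fun s : EuclideanSpace ℝ (Fin m) => MvPolynomial.eval (fun i => s i) P)
      (∑ i : Fin m, MvPolynomial.eval (fun j => t j) (pderiv i P) •
        (EuclideanSpace.proj i : EuclideanSpace ℝ (Fin m) →L[ℝ] ℝ)) t := by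
  induction P using MvPolynomial.induction_on with
  | C a =>
    simp only [eval_C, pderiv_C, map_zero, zero_smul, Finset.sum_const_zero]
    exact hasFDerivAt_const a t
  | add p q hp hq =>
    simp only [map_add, add_smul, Finset.sum_add_distrib]
    exact hp.add hq
  | mul_X p i hp =>
    have hX : HasFDerivAt (fun s : EuclideanSpace ℝ (Fin m) => s i)
        (EuclideanSpace.proj (𝕜 := ℝ) i) t := (EuclideanSpace.proj (𝕜 := ℝ) i).hasFDerivAt
    have key := hp.mul hX
    have hfun : (fun s : EuclideanSpace ℝ (Fin m) => MvPolynomial.eval (fun j => s j) (p * X i))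
        = fun s => MvPolynomial.eval (fun j => s j) p * s i := by
      funext s; simp
    rw [hfun]
    classical
    have heq : (∑ j : Fin m, MvPolynomial.eval (fun k => t k) (pderiv j (p * X i)) •
          (EuclideanSpace.proj (𝕜 := ℝ) j : EuclideanSpace ℝ (Fin m) →L[ℝ] ℝ))
        = (MvPolynomial.eval (fun k => t k) p • EuclideanSpace.proj (𝕜 := ℝ) i +
          t i • ∑ j : Fin m, MvPolynomial.eval (fun k => t k) (pderiv j p) •
            (EuclideanSpace.proj (𝕜 := ℝ) j : EuclideanSpace ℝ (Fin m) →L[ℝ] ℝ)) := by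
      ext v
      simp only [ContinuousLinearMap.coe_sum', Finset.sum_apply, ContinuousLinearMap.coe_smul',
        Pi.smul_apply, ContinuousLinearMap.add_apply, smul_eq_mul, pderiv_mul, map_add, map_mul,
        eval_X, pderiv_X, PiLp.proj_apply, Pi.single_apply,
        apply_ite (MvPolynomial.eval fun k => t k), map_one, map_zero, mul_ite, ite_mul,
        mul_zero, zero_mul, mul_one]
      simp only [add_mul, ite_mul, zero_mul, Finset.sum_add_distrib, Finset.sum_ite_eq,
        Finset.mem_univ, if_true, Finset.mul_sum]
      rw [add_comm]
      congr 1
      exact Finset.sum_congr rfl fun j _ => by ring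
    rw [heq]
    exact key

lemma norm_proj_le_one (i : Fin m) :
    ‖(EuclideanSpace.proj (𝕜 := ℝ) i : EuclideanSpace ℝ (Fin m) →L[ℝ] ℝ)‖ ≤ 1 := by
  refine ContinuousLinearMap.opNorm_le_bound _ zero_le_one fun v => ?_
  rw [one_mul]
  simpa [Real.norm_eq_abs] using coord_abs_le_norm v i

lemma deriv_bound (d : ℕ) (P : MvPolynomial (Fin m) ℝ) (hP : P.totalDegree ≤ d) :
    ∃ A₂ : ℝ, 0 ≤ A₂ ∧ ∀ t : EuclideanSpace ℝ (Fin m),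
      (1 + ‖t‖) * ‖∑ i : Fin m, MvPolynomial.eval (fun j => t j) (pderiv i P) •
        (EuclideanSpace.proj i : EuclideanSpace ℝ (Fin m) →L[ℝ] ℝ)‖ ≤ A₂ * (1 + ‖t‖) ^ d := by
  cases d with
  | zero =>
    refine ⟨0, le_refl _, fun t => ?_⟩
    have h0 : P.totalDegree = 0 := Nat.le_zero.mp hP
    simp [pderiv_eq_zero_of_totalDegree_eq_zero _ P h0]
  | succ n =>
    choose A hA0 hA using fun i : Fin m =>
      eval_growth n (pderiv i P) (pderiv_totalDegree_le i P n hP)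
    refine ⟨∑ i : Fin m, A i, Finset.sum_nonneg fun i _ => hA0 i, fun t => ?_⟩
    have h1 : (0:ℝ) ≤ 1 + ‖t‖ := by positivity
    have hns : ∀ (a : ℝ) (X : EuclideanSpace ℝ (Fin m) →L[ℝ] ℝ), ‖a • X‖ ≤ ‖a‖ * ‖X‖ :=
      fun a X => norm_smul_le a X
    have hL : ‖∑ i : Fin m, MvPolynomial.eval (fun j => t j) (pderiv i P) •
        (EuclideanSpace.proj i : EuclideanSpace ℝ (Fin m) →L[ℝ] ℝ)‖
        ≤ (∑ i : Fin m, A i) * (1 + ‖t‖) ^ n := by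
      refine (norm_sum_le _ _).trans ?_
      rw [Finset.sum_mul]
      refine Finset.sum_le_sum fun i _ => ?_
      refine (hns _ _).trans ?_
      rw [Real.norm_eq_abs]
      calc |MvPolynomial.eval (fun j => t j) (pderiv i P)| * ‖(EuclideanSpace.proj (𝕜 := ℝ) i :
            EuclideanSpace ℝ (Fin m) →L[ℝ] ℝ)‖
          ≤ (A i * (1 + ‖t‖) ^ n) * 1 :=
            mul_le_mul (hA i t) (norm_proj_le_one i) (norm_nonneg _)
              (mul_nonneg (hA0 i) (by positivity))
        _ = A i * (1 + ‖t‖) ^ n := mul_one _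
    refine le_trans (mul_le_mul_of_nonneg_left hL h1) (le_of_eq (by ring))

end Aux

lemma Qlow (d : ℕ) (c : ℕ → ℝ) (hc : ∀ k ≤ d, 0 ≤ c k) (hcd : 0 < c d)
    (Q : ℝ → ℝ) (hQ : Q = fun u : ℝ => ∑ k ∈ Finset.range (d + 1), c k * u ^ k)
    (hQpos : ∀ u : ℝ, 0 ≤ u → 0 < Q u) :
    ∃ ε : ℝ, 0 < ε ∧ ∀ u : ℝ, 0 ≤ u → ε * (1 + u) ^ d ≤ Q u := by
  have hcont : Continuous Q := by rw [hQ]; continuity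
  obtain ⟨x, hx, hmin⟩ := (isCompact_Icc (a := (0:ℝ)) (b := 1)).exists_isMinOn
    (Set.nonempty_Icc.2 zero_le_one) hcont.continuousOn
  set μ := Q x with hμ
  have hμpos : 0 < μ := hQpos x hx.1
  refine ⟨min μ (c d) / 2 ^ d, by positivity, fun u hu => ?_⟩
  rcases le_or_gt u 1 with h1 | h1
  · have h2 : (1 + u) ^ d ≤ 2 ^ d := by
      apply pow_le_pow_left₀ (by linarith) (by linarith)
    have h3 : μ ≤ Q u := hmin ⟨hu, h1⟩
    have h4 : min μ (c d) ≤ μ := min_le_left _ _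
    calc min μ (c d) / 2 ^ d * (1 + u) ^ d ≤ min μ (c d) / 2 ^ d * 2 ^ d := by
          apply mul_le_mul_of_nonneg_left h2 (by positivity)
      _ = min μ (c d) := by field_simp
      _ ≤ Q u := h4.trans h3
  · have h5 : c d * u ^ d ≤ Q u := by
      rw [hQ]
      exact Finset.single_le_sum (f := fun k => c k * u ^ k)
        (fun k hk => mul_nonneg (hc k (Nat.lt_succ_iff.mp (Finset.mem_range.mp hk)))
          (by positivity))
        (Finset.self_mem_range_succ d)
    have h2 : (1 + u) ^ d ≤ 2 ^ d * u ^ d := by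
      rw [← mul_pow]
      apply pow_le_pow_left₀ (by linarith) (by linarith)
    calc min μ (c d) / 2 ^ d * (1 + u) ^ d ≤ c d / 2 ^ d * (2 ^ d * u ^ d) := by
          apply mul_le_mul (by gcongr; exact min_le_right _ _) h2 (by positivity) (by positivity)
      _ = c d * u ^ d := by field_simp
      _ ≤ Q u := h5

lemma Qderiv (d : ℕ) (c : ℕ → ℝ)
    (Q : ℝ → ℝ) (hQ : Q = fun u : ℝ => ∑ k ∈ Finset.range (d + 1), c k * u ^ k) (u : ℝ) :
    HasDerivAt Q (∑ k ∈ Finset.range (d + 1), c k * (k * u ^ (k - 1))) u := by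
  rw [hQ]
  exact HasDerivAt.fun_sum fun k _ => (hasDerivAt_pow k u).const_mul (c k)

lemma Qderiv_bound (d : ℕ) (c : ℕ → ℝ) (hc : ∀ k ≤ d, 0 ≤ c k) (u : ℝ) (hu : 0 ≤ u) :
    0 ≤ (∑ k ∈ Finset.range (d + 1), c k * (k * u ^ (k - 1))) ∧
    (∑ k ∈ Finset.range (d + 1), c k * (k * u ^ (k - 1))) * (1 + u)
      ≤ (∑ k ∈ Finset.range (d + 1), c k * k) * (1 + u) ^ d := by
  constructor
  · refine Finset.sum_nonneg fun k hk => ?_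
    have hk' : k ≤ d := by simpa [Nat.lt_succ_iff] using hk
    exact mul_nonneg (hc k hk') (by positivity)
  · rw [Finset.sum_mul, Finset.sum_mul]
    refine Finset.sum_le_sum fun k hk => ?_
    have hk' : k ≤ d := by simpa [Nat.lt_succ_iff] using hk
    rcases Nat.eq_zero_or_pos k with rfl | hkpos
    · simp
    · have h1 : u ^ (k - 1) * (1 + u) ≤ (1 + u) ^ k := by
        calc u ^ (k - 1) * (1 + u) ≤ (1 + u) ^ (k - 1) * (1 + u) := by
              apply mul_le_mul_of_nonneg_right (pow_le_pow_left₀ hu (by linarith) _) (by linarith)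
          _ = (1 + u) ^ (k - 1 + 1) := (pow_succ _ _).symm
          _ = (1 + u) ^ k := by congr 1; omega
      have h2 : (1 + u) ^ k ≤ (1 + u) ^ d := pow_le_pow_right₀ (by linarith) hk'
      calc c k * (k * u ^ (k - 1)) * (1 + u) = c k * k * (u ^ (k - 1) * (1 + u)) := by ring
        _ ≤ c k * k * (1 + u) ^ d := by
            apply mul_le_mul_of_nonneg_left (h1.trans h2)
              (mul_nonneg (hc k hk') (Nat.cast_nonneg k))

/-- For a polynomial P on ℝ^m of degree d and Q(u) = Σ c_k u^k with c_k ≥ 0,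
c_d > 0 and Q > 0 on [0,∞), the quantity
H(P,Q) = sup_t (1+‖t‖)·‖∇(P/√(Q(‖t‖²)))(t)‖ is finite. -/
theorem stmt_17 (m d : ℕ) (P : MvPolynomial (Fin m) ℝ) (hP : P.totalDegree = d)
    (c : ℕ → ℝ) (hc : ∀ k ≤ d, 0 ≤ c k) (hcd : 0 < c d)
    (Q : ℝ → ℝ) (hQ : Q = fun u : ℝ => ∑ k ∈ Finset.range (d + 1), c k * u ^ k)
    (hQpos : ∀ u : ℝ, 0 ≤ u → 0 < Q u) :
    ∃ C : ℝ, ∀ t : EuclideanSpace ℝ (Fin m),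
      (1 + ‖t‖) *
          ‖gradient
            (fun s : EuclideanSpace ℝ (Fin m) =>
              MvPolynomial.eval (fun i => s i) P / Real.sqrt (Q (‖s‖ ^ 2))) t‖
        ≤ C := by
  classical
  obtain ⟨A, hA0, hA⟩ := eval_growth d P hP.le
  obtain ⟨A₂, hA₂0, hA₂⟩ := deriv_bound d P hP.le
  obtain ⟨ε, hε, hlow⟩ := Qlow d c hc hcd Q hQ hQpos
  set B₂ : ℝ := ∑ k ∈ Finset.range (d + 1), c k * k with hB₂def
  have hB₂0 : 0 ≤ B₂ := Finset.sum_nonneg fun k hk =>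
    mul_nonneg (hc k (Nat.lt_succ_iff.mp (Finset.mem_range.mp hk))) (Nat.cast_nonneg _)
  set δ : ℝ := Real.sqrt (ε / 2 ^ d) with hδdef
  have hδ : 0 < δ := Real.sqrt_pos.2 (by positivity)
  refine ⟨A₂ / δ + 3 / 2 * (A * B₂) / (ε * δ), fun t => ?_⟩
  have hns : ∀ (a : ℝ) (X : EuclideanSpace ℝ (Fin m) →L[ℝ] ℝ), ‖a • X‖ ≤ ‖a‖ * ‖X‖ :=
    fun a X => norm_smul_le a X
  set T : ℝ := 1 + ‖t‖ with hT
  have hT1 : (1:ℝ) ≤ T := le_add_of_nonneg_right (norm_nonneg t)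
  have hT0 : (0:ℝ) < T := by linarith
  set u : ℝ := ‖t‖ ^ 2 with hu
  have hu0 : (0:ℝ) ≤ u := sq_nonneg _
  have hQu : 0 < Q u := hQpos u hu0
  set s : ℝ := Real.sqrt (Q u) with hs
  have hs0 : 0 < s := Real.sqrt_pos.2 hQu
  have hssq : s ^ 2 = Q u := Real.sq_sqrt hQu.le
  -- lower bound on s
  have h1u : T ^ 2 / 2 ≤ 1 + u := by
    rw [hT, hu]; nlinarith [sq_nonneg (1 - ‖t‖)]
  have hslow : δ * T ^ d ≤ s := by
    have h2 : ε / 2 ^ d * (T ^ d) ^ 2 ≤ Q u := by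
      have h3 : ε / 2 ^ d * (T ^ d) ^ 2 = ε * (T ^ 2 / 2) ^ d := by
        rw [show (T ^ d) ^ 2 = (T ^ 2) ^ d by rw [← pow_mul, ← pow_mul, Nat.mul_comm], div_pow]
        ring
      rw [h3]
      calc ε * (T ^ 2 / 2) ^ d ≤ ε * (1 + u) ^ d := by
            apply mul_le_mul_of_nonneg_left (pow_le_pow_left₀ (by positivity) h1u d) hε.le
        _ ≤ Q u := hlow u hu0
    have h4 : δ * T ^ d = Real.sqrt (ε / 2 ^ d * (T ^ d) ^ 2) := by
      rw [Real.sqrt_mul (by positivity), Real.sqrt_sq (by positivity)]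
    rw [h4, hs]
    exact Real.sqrt_le_sqrt h2
  -- derivative of numerator
  set L : EuclideanSpace ℝ (Fin m) →L[ℝ] ℝ :=
    ∑ i : Fin m, MvPolynomial.eval (fun j => t j) (pderiv i P) •
      (EuclideanSpace.proj i : EuclideanSpace ℝ (Fin m) →L[ℝ] ℝ) with hLdef
  have hp : HasFDerivAt (fun y : EuclideanSpace ℝ (Fin m) =>
      MvPolynomial.eval (fun i => y i) P) L t := hasFDerivAt_eval_poly P t
  -- derivative of denominator
  set Q' : ℝ := ∑ k ∈ Finset.range (d + 1), c k * (k * u ^ (k - 1)) with hQ'def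
  obtain ⟨hQ'0, hQ'bound⟩ := Qderiv_bound d c hc u hu0
  have hQd : HasDerivAt Q Q' u := Qderiv d c Q hQ u
  have hn : HasFDerivAt (fun y : EuclideanSpace ℝ (Fin m) => ‖y‖ ^ 2)
      ((2 : ℝ) • (innerSL ℝ t)) t := by
    have := (hasStrictFDerivAt_norm_sq t).hasFDerivAt
    refine this.congr_fderiv ?_
    ext v
    simp [two_smul]
  have hcomp : HasFDerivAt (fun y : EuclideanSpace ℝ (Fin m) => Q (‖y‖ ^ 2))
      (Q' • ((2 : ℝ) • (innerSL ℝ t))) t :=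
    hQd.comp_hasFDerivAt t hn
  have hg : HasFDerivAt (fun y : EuclideanSpace ℝ (Fin m) => Real.sqrt (Q (‖y‖ ^ 2)))
      ((1 / (2 * s)) • (Q' • ((2 : ℝ) • (innerSL ℝ t)))) t := by
    have := hcomp.sqrt hQu.ne'
    convert this using 2
  set G : EuclideanSpace ℝ (Fin m) →L[ℝ] ℝ :=
    (1 / (2 * s)) • (Q' • ((2 : ℝ) • (innerSL ℝ t))) with hGdef
  have hGnorm : ‖G‖ ≤ Q' * ‖t‖ / s := by
    have h2n : ‖(2:ℝ) • (innerSL ℝ t)‖ ≤ 2 * ‖t‖ := by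
      refine (hns _ _).trans ?_
      rw [innerSL_apply_norm]
      simp
    have hq2 : ‖Q' • ((2:ℝ) • (innerSL ℝ t))‖ ≤ Q' * (2 * ‖t‖) := by
      refine (hns _ _).trans ?_
      rw [Real.norm_eq_abs, abs_of_nonneg hQ'0]
      exact mul_le_mul_of_nonneg_left h2n hQ'0
    have hfin : ‖G‖ ≤ (1 / (2 * s)) * (Q' * (2 * ‖t‖)) := by
      rw [hGdef]
      refine (hns _ _).trans ?_
      rw [Real.norm_eq_abs, abs_of_pos (by positivity : (0:ℝ) < 1 / (2 * s))]
      exact mul_le_mul_of_nonneg_left hq2 (by positivity)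
    refine hfin.trans (le_of_eq ?_)
    field_simp
  have hinv : HasFDerivAt (fun y : EuclideanSpace ℝ (Fin m) =>
      (Real.sqrt (Q (‖y‖ ^ 2)))⁻¹) ((-(s ^ 2)⁻¹) • G) t :=
    (hasDerivAt_inv hs0.ne').comp_hasFDerivAt t hg
  set D : EuclideanSpace ℝ (Fin m) →L[ℝ] ℝ :=
    MvPolynomial.eval (fun i => t i) P • ((-(s ^ 2)⁻¹) • G) + s⁻¹ • L with hDdef
  have hf : HasFDerivAt (fun y : EuclideanSpace ℝ (Fin m) =>
      MvPolynomial.eval (fun i => y i) P / Real.sqrt (Q (‖y‖ ^ 2))) D t := by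
    have := hp.mul hinv
    simp only [div_eq_mul_inv]
    convert this using 2
    all_goals rfl
  have hgradnorm : ‖gradient (fun y : EuclideanSpace ℝ (Fin m) =>
      MvPolynomial.eval (fun i => y i) P / Real.sqrt (Q (‖y‖ ^ 2))) t‖ = ‖D‖ := by
    unfold gradient
    rw [hf.fderiv]
    exact LinearIsometryEquiv.norm_map _ D
  rw [hgradnorm]
  -- now the estimates
  have hDnorm : ‖D‖ ≤ |MvPolynomial.eval (fun i => t i) P| * ((s ^ 2)⁻¹ * (Q' * ‖t‖ / s))
      + s⁻¹ * ‖L‖ := by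
    rw [hDdef]
    refine (norm_add_le _ _).trans (add_le_add ?_ ?_)
    · refine (hns _ _).trans ?_
      rw [Real.norm_eq_abs]
      refine mul_le_mul_of_nonneg_left ?_ (abs_nonneg _)
      refine (hns _ _).trans ?_
      rw [Real.norm_eq_abs, abs_neg, abs_inv, abs_of_pos (by positivity : (0:ℝ) < s ^ 2)]
      exact mul_le_mul_of_nonneg_left hGnorm (by positivity)
    · refine (hns _ _).trans (le_of_eq ?_)
      rw [Real.norm_eq_abs, abs_inv, abs_of_pos hs0]
  have hL2 : T * ‖L‖ ≤ A₂ * T ^ d := hA₂ t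
  have hpt : |MvPolynomial.eval (fun i => t i) P| ≤ A * T ^ d := hA t
  have htT : ‖t‖ * T ≤ 3 / 2 * (1 + u) := by
    rw [hT, hu]; nlinarith [sq_nonneg (1 - ‖t‖)]
  have h1ud : (1 + u) ^ d ≤ s ^ 2 / ε := by
    rw [le_div_iff₀ hε, mul_comm, hssq]
    exact hlow u hu0
  have hterm2 : T * (s⁻¹ * ‖L‖) ≤ A₂ / δ := by
    have e1 : T * (s⁻¹ * ‖L‖) = (T * ‖L‖) / s := by
      rw [div_eq_mul_inv]; ring
    rw [e1]
    calc (T * ‖L‖) / s ≤ (A₂ * T ^ d) / (δ * T ^ d) := by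
          apply div_le_div₀ (by positivity) hL2 (by positivity) hslow
      _ = A₂ / δ := by
          rw [mul_comm δ (T ^ d), ← div_div, mul_div_assoc, div_self (by positivity : T ^ d ≠ 0),
            mul_one]
  have hterm1 : T * (|MvPolynomial.eval (fun i => t i) P| * ((s ^ 2)⁻¹ * (Q' * ‖t‖ / s)))
      ≤ 3 / 2 * (A * B₂) / (ε * δ) := by
    have e1 : T * (|MvPolynomial.eval (fun i => t i) P| * ((s ^ 2)⁻¹ * (Q' * ‖t‖ / s)))
        = (|MvPolynomial.eval (fun i => t i) P| * (Q' * (‖t‖ * T))) / s ^ 3 := by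
      field_simp
    rw [e1]
    calc (|MvPolynomial.eval (fun i => t i) P| * (Q' * (‖t‖ * T))) / s ^ 3
        ≤ ((A * T ^ d) * (Q' * (3 / 2 * (1 + u)))) / s ^ 3 := by
          gcongr <;> first | positivity | exact hpt | exact htT
      _ = (3 / 2 * (A * T ^ d) * (Q' * (1 + u))) / s ^ 3 := by ring_nf
      _ ≤ (3 / 2 * (A * T ^ d) * (B₂ * (1 + u) ^ d)) / s ^ 3 := by
          gcongr <;> first | positivity | exact hQ'bound
      _ ≤ (3 / 2 * (A * T ^ d) * (B₂ * (s ^ 2 / ε))) / s ^ 3 := by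
          gcongr <;> first | positivity | exact h1ud
      _ = (3 / 2 * (A * B₂) / ε) * (T ^ d / s) := by
          field_simp
      _ ≤ (3 / 2 * (A * B₂) / ε) * (T ^ d / (δ * T ^ d)) := by
          gcongr <;> first | positivity | exact hslow
      _ = 3 / 2 * (A * B₂) / (ε * δ) := by
          rw [mul_comm δ (T ^ d), ← div_div, mul_div_assoc, div_self (by positivity : T ^ d ≠ 0)]
          field_simp
  calc T * ‖D‖ ≤ T * (|MvPolynomial.eval (fun i => t i) P| * ((s ^ 2)⁻¹ * (Q' * ‖t‖ / s))
        + s⁻¹ * ‖L‖) := mul_le_mul_of_nonneg_left hDnorm hT0.le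
    _ = T * (|MvPolynomial.eval (fun i => t i) P| * ((s ^ 2)⁻¹ * (Q' * ‖t‖ / s)))
        + T * (s⁻¹ * ‖L‖) := by ring
    _ ≤ 3 / 2 * (A * B₂) / (ε * δ) + A₂ / δ := add_le_add hterm1 hterm2
    _ = A₂ / δ + 3 / 2 * (A * B₂) / (ε * δ) := by ring
end
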